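/- The ∂X×∂X matrix Q = P_{∂X} + P_{∂X,X°} G_{X°} P_{X°,∂X} is stochastic (all entries are nonnegative and every row sums to 1) and irreducible, and the restriction π_{∂X} of π to ∂X is stationary for Q, i.e. π_{∂X} Q = π_{∂X}. -/

import Mathlib

open Matrix Finset

/-- The `A × A` submatrix of `P`. -/
def subMatrix {X : Type*} (P : Matrix X X ℝ) (A : Finset X) : Matrix A A ℝ :=
  Matrix.of fun x y => P x.1 y.1

/-- The `A × B` block of `P`. -/
def subMatrix2 {X : Type*} (P : Matrix X X ℝ) (A B : Finset X) : Matrix A B ℝ :=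
  Matrix.of fun x y => P x.1 y.1

/-- The Green kernel `G_A = (I_A − P_A)⁻¹`. -/
noncomputable def green {X : Type*} [DecidableEq X] (P : Matrix X X ℝ) (A : Finset X) :
    Matrix A A ℝ :=
  (1 - subMatrix P A)⁻¹

/-- The transition matrix `Q = P_{∂X} + P_{∂X,X°} G_{X°} P_{X°,∂X}` of the
boundary Markov chain. -/
noncomputable def Qmat {X : Type*} [Fintype X] [DecidableEq X] (P : Matrix X X ℝ)
    (Bnd : Finset X) : Matrix ↥Bnd ↥Bnd ℝ :=
  subMatrix P Bnd + subMatrix2 P Bnd Bndᶜ * green P Bndᶜ * subMatrix2 P Bndᶜ Bnd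

set_option linter.unusedSectionVars false
set_option linter.unusedVariables false
set_option maxHeartbeats 1600000

namespace BChain

lemma mul_entry_nonneg {ι κ σ : Type*} [Fintype κ] (A : Matrix ι κ ℝ) (B : Matrix κ σ ℝ)
    (hA : ∀ i j, 0 ≤ A i j) (hB : ∀ i j, 0 ≤ B i j) (i : ι) (j : σ) : 0 ≤ (A * B) i j := by
  rw [Matrix.mul_apply]
  exact Finset.sum_nonneg fun k _ => mul_nonneg (hA i k) (hB k j)

lemma exists_pos_term {ι : Type*} [Fintype ι] (f : ι → ℝ) (hf : ∀ i, 0 ≤ f i)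
    (h : 0 < ∑ i, f i) : ∃ i, 0 < f i := by
  by_contra hc
  push_neg at hc
  have : ∑ i, f i ≤ 0 := Finset.sum_nonpos fun i _ => hc i
  linarith

lemma pos_pos {a b : ℝ} (ha : 0 ≤ a) (hb : 0 ≤ b) (h : 0 < a * b) : 0 < a ∧ 0 < b :=
  ⟨ha.lt_of_ne fun h0 => by simp [← h0] at h, hb.lt_of_ne fun h0 => by simp [← h0] at h⟩

section Aux
variable {X : Type*} [Fintype X] [DecidableEq X] (P : Matrix X X ℝ)

lemma pow_entry_nonneg (hnonneg : ∀ x y, 0 ≤ P x y) (n : ℕ) (x y : X) : 0 ≤ (P ^ n) x y := by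
  induction n generalizing x y with
  | zero => simp [Matrix.one_apply]; split <;> norm_num
  | succ n ih =>
    rw [pow_succ, Matrix.mul_apply]
    exact Finset.sum_nonneg fun z _ => mul_nonneg (ih x z) (hnonneg z y)

lemma pow_row_sum (hrow : ∀ x, ∑ y, P x y = 1) (n : ℕ) (x : X) :
    ∑ y, (P ^ n) x y = 1 := by
  induction n generalizing x with
  | zero => simp [Matrix.one_apply]
  | succ n ih =>
    simp only [pow_succ, Matrix.mul_apply]
    rw [Finset.sum_comm]
    calc ∑ z, ∑ y, (P ^ n) x z * P z y
        = ∑ z, (P ^ n) x z * ∑ y, P z y := by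
          simp [Finset.mul_sum]
      _ = 1 := by simp [hrow, ih]

lemma subPow_nonneg (hnonneg : ∀ x y, 0 ≤ P x y) (A : Finset X) (n : ℕ) (a c : ↥A) :
    0 ≤ ((subMatrix P A) ^ n) a c := by
  induction n generalizing a c with
  | zero => simp [Matrix.one_apply]; split <;> norm_num
  | succ n ih =>
    rw [pow_succ, Matrix.mul_apply]
    exact Finset.sum_nonneg fun z _ => mul_nonneg (ih a z) (hnonneg z.1 c.1)

lemma subPow_le (hnonneg : ∀ x y, 0 ≤ P x y) (A : Finset X) (n : ℕ) (a c : ↥A) :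
    ((subMatrix P A) ^ n) a c ≤ (P ^ n) a.1 c.1 := by
  induction n generalizing a c with
  | zero =>
    simp only [pow_zero, Matrix.one_apply]
    by_cases h : a = c
    · simp [h]
    · have h' : a.1 ≠ c.1 := fun hh => h (Subtype.ext hh)
      simp [h, h']
  | succ n ih =>
    rw [pow_succ, pow_succ, Matrix.mul_apply, Matrix.mul_apply]
    calc ∑ d : ↥A, ((subMatrix P A) ^ n) a d * (subMatrix P A) d c
        ≤ ∑ d : ↥A, (P ^ n) a.1 d.1 * P d.1 c.1 := by
          refine Finset.sum_le_sum fun d _ => ?_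
          exact mul_le_mul (ih a d) (le_refl _) (hnonneg d.1 c.1)
            (pow_entry_nonneg P hnonneg n a.1 d.1)
      _ = ∑ d ∈ A, (P ^ n) a.1 d * P d c.1 := by
          exact Finset.sum_coe_sort A (fun d => (P ^ n) a.1 d * P d c.1)
      _ ≤ ∑ d, (P ^ n) a.1 d * P d c.1 := by
          refine Finset.sum_le_sum_of_subset_of_nonneg (Finset.subset_univ A) fun d _ _ =>
            mul_nonneg (pow_entry_nonneg P hnonneg n a.1 d) (hnonneg d c.1)


variable (hnonneg : ∀ x y, 0 ≤ P x y) (hrow : ∀ x, ∑ y, P x y = 1)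
include hnonneg hrow

lemma rowsum_le_one (A : Finset X) (n : ℕ) (a : ↥A) :
    ∑ c : ↥A, ((subMatrix P A) ^ n) a c ≤ 1 := by
  calc ∑ c : ↥A, ((subMatrix P A) ^ n) a c
      ≤ ∑ c : ↥A, (P ^ n) a.1 c.1 := Finset.sum_le_sum fun c _ => subPow_le P hnonneg A n a c
    _ = ∑ c ∈ A, (P ^ n) a.1 c := Finset.sum_coe_sort A (fun c => (P ^ n) a.1 c)
    _ ≤ ∑ c, (P ^ n) a.1 c := Finset.sum_le_sum_of_subset_of_nonneg (Finset.subset_univ A)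
        (fun c _ _ => pow_entry_nonneg P hnonneg n a.1 c)
    _ = 1 := pow_row_sum P hrow n a.1

lemma rowsum_anti (A : Finset X) (n k : ℕ) (a : ↥A) :
    ∑ c : ↥A, ((subMatrix P A) ^ (n + k)) a c ≤ ∑ c : ↥A, ((subMatrix P A) ^ n) a c := by
  have h : ∀ c : ↥A, ((subMatrix P A) ^ (n + k)) a c
      = ∑ d : ↥A, ((subMatrix P A) ^ n) a d * ((subMatrix P A) ^ k) d c := by
    intro c; rw [pow_add, Matrix.mul_apply]
  calc ∑ c : ↥A, ((subMatrix P A) ^ (n + k)) a c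
      = ∑ d : ↥A, ((subMatrix P A) ^ n) a d * ∑ c : ↥A, ((subMatrix P A) ^ k) d c := by
        simp only [h]; rw [Finset.sum_comm]; simp [Finset.mul_sum]
    _ ≤ ∑ d : ↥A, ((subMatrix P A) ^ n) a d * 1 :=
        Finset.sum_le_sum fun d _ => mul_le_mul_of_nonneg_left
          (rowsum_le_one P hnonneg hrow A k d) (subPow_nonneg P hnonneg A n a d)
    _ = ∑ d : ↥A, ((subMatrix P A) ^ n) a d := by simp

lemma exists_contraction (hirr : ∀ x y, ∃ n, 1 ≤ n ∧ 0 < (P ^ n) x y)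
    (Bnd : Finset X) (hB : Bnd.Nonempty) :
    ∃ N ε, 0 ≤ ε ∧ ε < 1 ∧
      ∀ a : ↥Bndᶜ, ∑ c : ↥Bndᶜ, ((subMatrix P Bndᶜ) ^ N) a c ≤ ε := by
  obtain ⟨b, hb⟩ := hB
  rcases isEmpty_or_nonempty ↥Bndᶜ with hE | hNE
  · exact ⟨0, 0, le_refl _, by norm_num, fun a => (hE.false a).elim⟩
  have key : ∀ a : ↥Bndᶜ, ∃ n, ∑ c : ↥Bndᶜ, ((subMatrix P Bndᶜ) ^ n) a c < 1 := by
    intro a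
    obtain ⟨n, _, hpos⟩ := hirr a.1 b
    refine ⟨n, ?_⟩
    have h1 : ∑ c : ↥Bndᶜ, ((subMatrix P Bndᶜ) ^ n) a c ≤ ∑ c ∈ Bndᶜ, (P ^ n) a.1 c := by
      calc ∑ c : ↥Bndᶜ, ((subMatrix P Bndᶜ) ^ n) a c
          ≤ ∑ c : ↥Bndᶜ, (P ^ n) a.1 c.1 := Finset.sum_le_sum fun c _ => subPow_le P hnonneg _ n a c
        _ = ∑ c ∈ Bndᶜ, (P ^ n) a.1 c := Finset.sum_coe_sort _ _
    have h2 : ∑ c ∈ Bndᶜ, (P ^ n) a.1 c + ∑ c ∈ Bnd, (P ^ n) a.1 c = 1 := by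
      rw [Finset.sum_compl_add_sum Bnd]
      exact pow_row_sum P hrow n a.1
    have h3 : (P ^ n) a.1 b ≤ ∑ c ∈ Bnd, (P ^ n) a.1 c :=
      Finset.single_le_sum (fun c _ => pow_entry_nonneg P hnonneg n a.1 c) hb
    linarith
  choose nf hnf using key
  set N := Finset.univ.sup nf with hN
  have hNle : ∀ a : ↥Bndᶜ, ∑ c : ↥Bndᶜ, ((subMatrix P Bndᶜ) ^ N) a c < 1 := by
    intro a
    have h1 : nf a ≤ N := Finset.le_sup (Finset.mem_univ a)
    have := rowsum_anti P hnonneg hrow Bndᶜ (nf a) (N - nf a) a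
    rw [Nat.add_sub_cancel' h1] at this
    exact lt_of_le_of_lt this (hnf a)
  set ε := Finset.univ.sup' (Finset.univ_nonempty (α := ↥Bndᶜ))
    (fun a => ∑ c : ↥Bndᶜ, ((subMatrix P Bndᶜ) ^ N) a c) with hε
  refine ⟨N, ε, ?_, ?_, ?_⟩
  · obtain ⟨a⟩ := hNE
    rw [hε]
    exact le_trans (Finset.sum_nonneg fun c _ => subPow_nonneg P hnonneg _ N a c)
      (Finset.le_sup' (f := fun a : ↥Bndᶜ => ∑ c : ↥Bndᶜ, ((subMatrix P Bndᶜ) ^ N) a c) (Finset.mem_univ a))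
  · exact (Finset.sup'_lt_iff _).mpr fun a _ => hNle a
  · intro a; rw [hε]; exact Finset.le_sup' (f := fun a : ↥Bndᶜ => ∑ c : ↥Bndᶜ, ((subMatrix P Bndᶜ) ^ N) a c) (Finset.mem_univ a)

variable (hirr : ∀ x y, ∃ n, 1 ≤ n ∧ 0 < (P ^ n) x y) (Bnd : Finset X) (hB : Bnd.Nonempty)
include hirr hB

lemma det_isUnit : IsUnit (1 - subMatrix P Bndᶜ).det := by
  set M := subMatrix P Bndᶜ with hM
  rw [isUnit_iff_ne_zero]
  intro hdet
  obtain ⟨v, hv0, hv⟩ := (Matrix.exists_mulVec_eq_zero_iff).mpr hdet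
  have hfix : M.mulVec v = v := by
    have := hv
    rw [Matrix.sub_mulVec, Matrix.one_mulVec, sub_eq_zero] at this
    exact this.symm
  have hpow : ∀ n, (M ^ n).mulVec v = v := by
    intro n
    induction n with
    | zero => simp
    | succ n ih =>
      rw [pow_succ, ← Matrix.mulVec_mulVec, hfix, ih]
  obtain ⟨N, ε, hε0, hε1, hcon⟩ := exists_contraction P hnonneg hrow hirr Bnd hB
  obtain ⟨a0, ha0⟩ : ∃ a, v a ≠ 0 := Function.ne_iff.mp hv0
  obtain ⟨a, -, ha⟩ := Finset.exists_max_image Finset.univ (fun a => |v a|) ⟨a0, Finset.mem_univ a0⟩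
  have hva : 0 < |v a| := lt_of_lt_of_le (abs_pos.mpr ha0) (ha a0 (Finset.mem_univ a0))
  have hkey : |v a| ≤ ε * |v a| := by
    calc |v a| = |((M ^ N).mulVec v) a| := by rw [hpow]
      _ = |∑ c, (M ^ N) a c * v c| := by rw [Matrix.mulVec, dotProduct]
      _ ≤ ∑ c, |(M ^ N) a c * v c| := Finset.abs_sum_le_sum_abs _ _
      _ = ∑ c, (M ^ N) a c * |v c| := by
          refine Finset.sum_congr rfl fun c _ => ?_
          rw [abs_mul, abs_of_nonneg (subPow_nonneg P hnonneg _ N a c)]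
      _ ≤ ∑ c, (M ^ N) a c * |v a| := Finset.sum_le_sum fun c _ =>
          mul_le_mul_of_nonneg_left (ha c (Finset.mem_univ c)) (subPow_nonneg P hnonneg _ N a c)
      _ = (∑ c, (M ^ N) a c) * |v a| := by rw [Finset.sum_mul]
      _ ≤ ε * |v a| := mul_le_mul_of_nonneg_right (hcon a) (abs_nonneg _)
  nlinarith

lemma green_mul_eq : (1 - subMatrix P Bndᶜ) * green P Bndᶜ = 1 :=
  Matrix.mul_nonsing_inv _ (det_isUnit P hnonneg hrow hirr Bnd hB)

lemma mul_green_eq : green P Bndᶜ * (1 - subMatrix P Bndᶜ) = 1 :=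
  Matrix.nonsing_inv_mul _ (det_isUnit P hnonneg hrow hirr Bnd hB)

lemma green_decomp (K : ℕ) :
    green P Bndᶜ = (∑ i ∈ Finset.range K, (subMatrix P Bndᶜ) ^ i)
      + (subMatrix P Bndᶜ) ^ K * green P Bndᶜ := by
  set M := subMatrix P Bndᶜ with hM
  have h1 : (∑ i ∈ Finset.range K, M ^ i) * (1 - M) = 1 - M ^ K := by
    have h := geom_sum_mul M K
    calc (∑ i ∈ Finset.range K, M ^ i) * (1 - M)
        = -((∑ i ∈ Finset.range K, M ^ i) * (M - 1)) := by rw [← mul_neg, neg_sub]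
      _ = -(M ^ K - 1) := by rw [h]
      _ = 1 - M ^ K := neg_sub _ _
  have h2 : (∑ i ∈ Finset.range K, M ^ i) * ((1 - M) * green P Bndᶜ)
      = (1 - M ^ K) * green P Bndᶜ := by rw [← Matrix.mul_assoc, h1]
  rw [green_mul_eq P hnonneg hrow hirr Bnd hB, Matrix.mul_one, Matrix.sub_mul,
    Matrix.one_mul] at h2
  rw [h2]
  abel

lemma green_nonneg (a c : ↥Bndᶜ) : 0 ≤ green P Bndᶜ a c := by
  set M := subMatrix P Bndᶜ with hM
  obtain ⟨N, ε, hε0, hε1, hcon⟩ := exists_contraction P hnonneg hrow hirr Bnd hB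
  have rowsum_kN : ∀ k (a : ↥Bndᶜ), ∑ d : ↥Bndᶜ, (M ^ (k * N)) a d ≤ ε ^ k := by
    intro k
    induction k with
    | zero =>
      intro a
      simp [Matrix.one_apply]
    | succ k ih =>
      intro a
      have : (k + 1) * N = k * N + N := by ring
      rw [this]
      calc ∑ d : ↥Bndᶜ, (M ^ (k * N + N)) a d
          = ∑ d : ↥Bndᶜ, ∑ e : ↥Bndᶜ, (M ^ (k * N)) a e * (M ^ N) e d := by
            simp [pow_add, Matrix.mul_apply]
        _ = ∑ e : ↥Bndᶜ, (M ^ (k * N)) a e * ∑ d : ↥Bndᶜ, (M ^ N) e d := by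
            rw [Finset.sum_comm]; simp [Finset.mul_sum]
        _ ≤ ∑ e : ↥Bndᶜ, (M ^ (k * N)) a e * ε := Finset.sum_le_sum fun e _ =>
            mul_le_mul_of_nonneg_left (hcon e) (subPow_nonneg P hnonneg _ _ a e)
        _ = (∑ e : ↥Bndᶜ, (M ^ (k * N)) a e) * ε := by rw [Finset.sum_mul]
        _ ≤ ε ^ k * ε := mul_le_mul_of_nonneg_right (ih a) hε0
        _ = ε ^ (k + 1) := by ring
  have entry_le : ∀ k (a d : ↥Bndᶜ), (M ^ (k * N)) a d ≤ ε ^ k := fun k a d =>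
    le_trans (Finset.single_le_sum (fun e _ => subPow_nonneg P hnonneg _ _ a e)
      (Finset.mem_univ d)) (rowsum_kN k a)
  set C := ∑ d : ↥Bndᶜ, |green P Bndᶜ d c| with hC
  have hC0 : 0 ≤ C := Finset.sum_nonneg fun d _ => abs_nonneg _
  have hlow : ∀ k, -(ε ^ k * C) ≤ green P Bndᶜ a c := by
    intro k
    have hd := green_decomp P hnonneg hrow hirr Bnd hB (k * N)
    have h1 : green P Bndᶜ a c = (∑ i ∈ Finset.range (k * N), M ^ i) a c
        + ∑ d : ↥Bndᶜ, (M ^ (k * N)) a d * green P Bndᶜ d c := by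
      conv_lhs => rw [hd]
      rw [Matrix.add_apply, Matrix.mul_apply]
    have h2 : 0 ≤ (∑ i ∈ Finset.range (k * N), M ^ i) a c := by
      rw [Matrix.sum_apply]
      exact Finset.sum_nonneg fun i _ => subPow_nonneg P hnonneg _ i a c
    have h3 : |∑ d : ↥Bndᶜ, (M ^ (k * N)) a d * green P Bndᶜ d c| ≤ ε ^ k * C := by
      calc |∑ d : ↥Bndᶜ, (M ^ (k * N)) a d * green P Bndᶜ d c|
          ≤ ∑ d : ↥Bndᶜ, |(M ^ (k * N)) a d * green P Bndᶜ d c| :=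
            Finset.abs_sum_le_sum_abs _ _
        _ = ∑ d : ↥Bndᶜ, (M ^ (k * N)) a d * |green P Bndᶜ d c| := by
            refine Finset.sum_congr rfl fun d _ => ?_
            rw [abs_mul, abs_of_nonneg (subPow_nonneg P hnonneg _ _ a d)]
        _ ≤ ∑ d : ↥Bndᶜ, ε ^ k * |green P Bndᶜ d c| := Finset.sum_le_sum fun d _ =>
            mul_le_mul_of_nonneg_right (entry_le k a d) (abs_nonneg _)
        _ = ε ^ k * C := by rw [hC, Finset.mul_sum]
    have := neg_abs_le (∑ d : ↥Bndᶜ, (M ^ (k * N)) a d * green P Bndᶜ d c)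
    linarith
  by_contra hneg
  push_neg at hneg
  set δ := -green P Bndᶜ a c with hδ
  have hδ0 : 0 < δ := by simp [hδ]; linarith
  rcases eq_or_lt_of_le hC0 with hCz | hCpos
  · have := hlow 0; rw [← hCz] at this; simp at this; linarith
  · obtain ⟨k, hk⟩ := exists_pow_lt_of_lt_one (div_pos hδ0 hCpos) hε1
    have : ε ^ k * C < δ := by
      exact (lt_div_iff₀ hCpos).mp hk
    have := hlow k
    linarith

lemma green_ge_pow (j : ℕ) (a c : ↥Bndᶜ) :
    ((subMatrix P Bndᶜ) ^ j) a c ≤ green P Bndᶜ a c := by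
  set M := subMatrix P Bndᶜ with hM
  have hd := green_decomp P hnonneg hrow hirr Bnd hB (j + 1)
  have h1 : green P Bndᶜ a c = (∑ i ∈ Finset.range (j + 1), M ^ i) a c
      + ∑ d : ↥Bndᶜ, (M ^ (j + 1)) a d * green P Bndᶜ d c := by
    conv_lhs => rw [hd]
    rw [Matrix.add_apply, Matrix.mul_apply]
  have h2 : (M ^ j) a c ≤ (∑ i ∈ Finset.range (j + 1), M ^ i) a c := by
    rw [Matrix.sum_apply]
    refine Finset.single_le_sum (f := fun i => (M ^ i) a c)
      (fun i _ => subPow_nonneg P hnonneg _ i a c) (Finset.self_mem_range_succ j)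
  have h3 : 0 ≤ ∑ d : ↥Bndᶜ, (M ^ (j + 1)) a d * green P Bndᶜ d c :=
    Finset.sum_nonneg fun d _ => mul_nonneg (subPow_nonneg P hnonneg _ _ a d)
      (green_nonneg P hnonneg hrow hirr Bnd hB d c)
  linarith

lemma Q_nonneg (x y : ↥Bnd) : 0 ≤ Qmat P Bnd x y := by
  have h1 : 0 ≤ subMatrix P Bnd x y := hnonneg x.1 y.1
  have h2 : 0 ≤ (subMatrix2 P Bnd Bndᶜ * green P Bndᶜ * subMatrix2 P Bndᶜ Bnd) x y := by
    rw [Matrix.mul_apply]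
    refine Finset.sum_nonneg fun d _ => mul_nonneg ?_ (hnonneg d.1 y.1)
    rw [Matrix.mul_apply]
    exact Finset.sum_nonneg fun c _ => mul_nonneg (hnonneg x.1 c.1)
      (green_nonneg P hnonneg hrow hirr Bnd hB c d)
  have : Qmat P Bnd x y = subMatrix P Bnd x y
      + (subMatrix2 P Bnd Bndᶜ * green P Bndᶜ * subMatrix2 P Bndᶜ Bnd) x y := rfl
  linarith

lemma GPAB_rowsum (c : ↥Bndᶜ) :
    ∑ y : ↥Bnd, (green P Bndᶜ * subMatrix2 P Bndᶜ Bnd) c y = 1 := by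
  set M := subMatrix P Bndᶜ
  set G := green P Bndᶜ
  have hGM : G - G * M = 1 := by
    have h := mul_green_eq P hnonneg hrow hirr Bnd hB
    rwa [Matrix.mul_sub, Matrix.mul_one] at h
  have claim1 : ∀ d : ↥Bndᶜ, (∑ y : ↥Bnd, P d.1 y.1) = 1 - ∑ e : ↥Bndᶜ, M d e := by
    intro d
    have hs : ∑ y ∈ Bndᶜ, P d.1 y + ∑ y ∈ Bnd, P d.1 y = 1 := by
      rw [Finset.sum_compl_add_sum Bnd]; exact hrow d.1
    have e1 : ∑ y : ↥Bnd, P d.1 y.1 = ∑ y ∈ Bnd, P d.1 y := Finset.sum_coe_sort _ _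
    have e2 : ∑ e : ↥Bndᶜ, M d e = ∑ y ∈ Bndᶜ, P d.1 y := Finset.sum_coe_sort _ _
    rw [e1, e2]; linarith
  calc ∑ y : ↥Bnd, (G * subMatrix2 P Bndᶜ Bnd) c y
      = ∑ y : ↥Bnd, ∑ d : ↥Bndᶜ, G c d * P d.1 y.1 := by
        refine Finset.sum_congr rfl fun y _ => ?_; rw [Matrix.mul_apply]; rfl
    _ = ∑ d : ↥Bndᶜ, G c d * ∑ y : ↥Bnd, P d.1 y.1 := by
        rw [Finset.sum_comm]; simp [Finset.mul_sum]
    _ = ∑ d : ↥Bndᶜ, (G c d - G c d * ∑ e : ↥Bndᶜ, M d e) := by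
        refine Finset.sum_congr rfl fun d _ => ?_; rw [claim1 d]; ring
    _ = ∑ d : ↥Bndᶜ, G c d - ∑ e : ↥Bndᶜ, (G * M) c e := by
        rw [Finset.sum_sub_distrib]
        congr 1
        calc ∑ d : ↥Bndᶜ, G c d * ∑ e : ↥Bndᶜ, M d e
            = ∑ d : ↥Bndᶜ, ∑ e : ↥Bndᶜ, G c d * M d e := by
              refine Finset.sum_congr rfl fun d _ => ?_; rw [Finset.mul_sum]
          _ = ∑ e : ↥Bndᶜ, ∑ d : ↥Bndᶜ, G c d * M d e := Finset.sum_comm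
          _ = ∑ e : ↥Bndᶜ, (G * M) c e := by
              refine Finset.sum_congr rfl fun e _ => ?_; rw [Matrix.mul_apply]
    _ = ∑ e : ↥Bndᶜ, (G - G * M) c e := by
        simp only [Matrix.sub_apply]; rw [Finset.sum_sub_distrib]
    _ = 1 := by rw [hGM]; simp [Matrix.one_apply]

lemma Q_rowsum (x : ↥Bnd) : ∑ y : ↥Bnd, Qmat P Bnd x y = 1 := by
  have expand : ∀ y : ↥Bnd, Qmat P Bnd x y = subMatrix P Bnd x y
      + ∑ c : ↥Bndᶜ, P x.1 c.1 * (green P Bndᶜ * subMatrix2 P Bndᶜ Bnd) c y := by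
    intro y
    have : Qmat P Bnd x y = subMatrix P Bnd x y
        + (subMatrix2 P Bnd Bndᶜ * (green P Bndᶜ * subMatrix2 P Bndᶜ Bnd)) x y := by
      rw [Qmat, Matrix.mul_assoc]; rfl
    rw [this, Matrix.mul_apply]; rfl
  calc ∑ y : ↥Bnd, Qmat P Bnd x y
      = ∑ y : ↥Bnd, subMatrix P Bnd x y
        + ∑ c : ↥Bndᶜ, P x.1 c.1 * ∑ y : ↥Bnd, (green P Bndᶜ * subMatrix2 P Bndᶜ Bnd) c y := by
        simp only [expand]
        rw [Finset.sum_add_distrib]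
        congr 1
        rw [Finset.sum_comm]
        simp [Finset.mul_sum]
    _ = ∑ y : ↥Bnd, P x.1 y.1 + ∑ c : ↥Bndᶜ, P x.1 c.1 := by
        simp only [GPAB_rowsum P hnonneg hrow hirr Bnd hB, mul_one]; rfl
    _ = ∑ y ∈ Bnd, P x.1 y + ∑ c ∈ Bndᶜ, P x.1 c := by
        rw [Finset.sum_coe_sort _ _, Finset.sum_coe_sort _ _]
    _ = 1 := by rw [add_comm, Finset.sum_compl_add_sum Bnd]; exact hrow x.1

lemma Q_stat (π : X → ℝ) (hπstat : ∀ y, ∑ x, π x * P x y = π y) (y : ↥Bnd) :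
    ∑ x : ↥Bnd, π x.1 * Qmat P Bnd x y = π y.1 := by
  set M := subMatrix P Bndᶜ
  set G := green P Bndᶜ
  have hMG : G - M * G = 1 := by
    have h := green_mul_eq P hnonneg hrow hirr Bnd hB
    rwa [Matrix.sub_mul, Matrix.one_mul] at h
  set u : ↥Bndᶜ → ℝ := fun c => ∑ x : ↥Bnd, π x.1 * P x.1 c.1 with hu
  have hu_eq : ∀ c : ↥Bndᶜ, u c = π c.1 - ∑ a : ↥Bndᶜ, π a.1 * M a c := by
    intro c
    have hs : ∑ x ∈ Bndᶜ, π x * P x c.1 + ∑ x ∈ Bnd, π x * P x c.1 = π c.1 := by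
      rw [Finset.sum_compl_add_sum Bnd]; exact hπstat c.1
    have e1 : u c = ∑ x ∈ Bnd, π x * P x c.1 := by
      simp only [hu]; exact Finset.sum_coe_sort Bnd (fun x => π x * P x c.1)
    have e2 : ∑ a : ↥Bndᶜ, π a.1 * M a c = ∑ x ∈ Bndᶜ, π x * P x c.1 :=
      Finset.sum_coe_sort Bndᶜ (fun x => π x * P x c.1)
    rw [e1, e2]; linarith
  have claim3 : ∀ d : ↥Bndᶜ, ∑ c : ↥Bndᶜ, u c * G c d = π d.1 := by
    intro d
    calc ∑ c : ↥Bndᶜ, u c * G c d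
        = ∑ c : ↥Bndᶜ, (π c.1 * G c d - (∑ a : ↥Bndᶜ, π a.1 * M a c) * G c d) := by
          refine Finset.sum_congr rfl fun c _ => ?_; rw [hu_eq c]; ring
      _ = ∑ c : ↥Bndᶜ, π c.1 * G c d - ∑ a : ↥Bndᶜ, π a.1 * (M * G) a d := by
          rw [Finset.sum_sub_distrib]
          congr 1
          calc ∑ c : ↥Bndᶜ, (∑ a : ↥Bndᶜ, π a.1 * M a c) * G c d
              = ∑ c : ↥Bndᶜ, ∑ a : ↥Bndᶜ, π a.1 * (M a c * G c d) := by
                refine Finset.sum_congr rfl fun c _ => ?_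
                rw [Finset.sum_mul]
                refine Finset.sum_congr rfl fun a _ => ?_; ring
            _ = ∑ a : ↥Bndᶜ, ∑ c : ↥Bndᶜ, π a.1 * (M a c * G c d) := Finset.sum_comm
            _ = ∑ a : ↥Bndᶜ, π a.1 * (M * G) a d := by
                refine Finset.sum_congr rfl fun a _ => ?_
                rw [Matrix.mul_apply, Finset.mul_sum]
      _ = ∑ c : ↥Bndᶜ, π c.1 * ((G - M * G) c d) := by
          simp only [Matrix.sub_apply, mul_sub]
          rw [Finset.sum_sub_distrib]
      _ = π d.1 := by
          rw [hMG]
          rw [Finset.sum_eq_single d]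
          · simp [Matrix.one_apply]
          · intro c _ hc; simp [Matrix.one_apply, hc]
          · intro h; exact absurd (Finset.mem_univ d) h
  have expand : ∀ x : ↥Bnd, Qmat P Bnd x y = P x.1 y.1
      + ∑ c : ↥Bndᶜ, P x.1 c.1 * (G * subMatrix2 P Bndᶜ Bnd) c y := by
    intro x
    have : Qmat P Bnd x y = subMatrix P Bnd x y
        + (subMatrix2 P Bnd Bndᶜ * (G * subMatrix2 P Bndᶜ Bnd)) x y := by
      rw [Qmat, Matrix.mul_assoc]; rfl
    rw [this, Matrix.mul_apply]; rfl
  calc ∑ x : ↥Bnd, π x.1 * Qmat P Bnd x y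
      = ∑ x : ↥Bnd, π x.1 * P x.1 y.1
        + ∑ c : ↥Bndᶜ, u c * (G * subMatrix2 P Bndᶜ Bnd) c y := by
        simp only [expand, mul_add]
        rw [Finset.sum_add_distrib]
        congr 1
        calc ∑ x : ↥Bnd, π x.1 * ∑ c : ↥Bndᶜ, P x.1 c.1 * (G * subMatrix2 P Bndᶜ Bnd) c y
            = ∑ x : ↥Bnd, ∑ c : ↥Bndᶜ, π x.1 * P x.1 c.1 * (G * subMatrix2 P Bndᶜ Bnd) c y := by
              refine Finset.sum_congr rfl fun x _ => ?_
              rw [Finset.mul_sum]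
              refine Finset.sum_congr rfl fun c _ => ?_; ring
          _ = ∑ c : ↥Bndᶜ, ∑ x : ↥Bnd, π x.1 * P x.1 c.1 * (G * subMatrix2 P Bndᶜ Bnd) c y :=
              Finset.sum_comm
          _ = ∑ c : ↥Bndᶜ, u c * (G * subMatrix2 P Bndᶜ Bnd) c y := by
              refine Finset.sum_congr rfl fun c _ => ?_
              simp only [hu]; rw [Finset.sum_mul]
    _ = ∑ x : ↥Bnd, π x.1 * P x.1 y.1 + ∑ d : ↥Bndᶜ, π d.1 * P d.1 y.1 := by
        congr 1
        calc ∑ c : ↥Bndᶜ, u c * (G * subMatrix2 P Bndᶜ Bnd) c y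
            = ∑ c : ↥Bndᶜ, ∑ d : ↥Bndᶜ, u c * (G c d * P d.1 y.1) := by
              refine Finset.sum_congr rfl fun c _ => ?_
              rw [Matrix.mul_apply, Finset.mul_sum]; rfl
          _ = ∑ d : ↥Bndᶜ, (∑ c : ↥Bndᶜ, u c * G c d) * P d.1 y.1 := by
              rw [Finset.sum_comm]
              refine Finset.sum_congr rfl fun d _ => ?_
              rw [Finset.sum_mul]
              refine Finset.sum_congr rfl fun c _ => ?_; ring
          _ = ∑ d : ↥Bndᶜ, π d.1 * P d.1 y.1 := by
              refine Finset.sum_congr rfl fun d _ => ?_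
              rw [claim3 d]
    _ = ∑ x ∈ Bnd, π x * P x y.1 + ∑ d ∈ Bndᶜ, π d * P d y.1 :=
        congrArg₂ (· + ·) (Finset.sum_coe_sort Bnd (fun x => π x * P x y.1))
          (Finset.sum_coe_sort Bndᶜ (fun d => π d * P d y.1))
    _ = π y.1 := by rw [add_comm, Finset.sum_compl_add_sum Bnd]; exact hπstat y.1

lemma Qpow_nonneg (k : ℕ) (x y : ↥Bnd) : 0 ≤ ((Qmat P Bnd) ^ k) x y := by
  induction k generalizing x y with
  | zero => simp [Matrix.one_apply]; split <;> norm_num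
  | succ k ih =>
    rw [pow_succ, Matrix.mul_apply]
    exact Finset.sum_nonneg fun b _ => mul_nonneg (ih x b) (Q_nonneg P hnonneg hrow hirr Bnd hB b y)

lemma reach :
    ∀ m, 1 ≤ m →
      (∀ x y : ↥Bnd, 0 < (P ^ m) x.1 y.1 →
        ∃ k, 1 ≤ k ∧ 0 < ((Qmat P Bnd) ^ k) x y) ∧
      (∀ (z : ↥Bndᶜ) (y : ↥Bnd), 0 < (P ^ m) z.1 y.1 →
        ∃ k, 0 < ((green P Bndᶜ * subMatrix2 P Bndᶜ Bnd) * (Qmat P Bnd) ^ k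
          : Matrix ↥Bndᶜ ↥Bnd ℝ) z y) := by
  set M := subMatrix P Bndᶜ with hM
  set G := green P Bndᶜ with hG
  set PAB := subMatrix2 P Bndᶜ Bnd with hPAB
  set Q := Qmat P Bnd with hQ
  have hGnn : ∀ a c : ↥Bndᶜ, 0 ≤ G a c := green_nonneg P hnonneg hrow hirr Bnd hB
  have hPABnn : ∀ (c : ↥Bndᶜ) (y : ↥Bnd), 0 ≤ PAB c y := fun c y => hnonneg c.1 y.1
  have hQnn := Q_nonneg P hnonneg hrow hirr Bnd hB
  have hQpnn := Qpow_nonneg P hnonneg hrow hirr Bnd hB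
  have hTnn : ∀ (c : ↥Bndᶜ) (y : ↥Bnd), 0 ≤ (G * PAB) c y :=
    mul_entry_nonneg G PAB hGnn hPABnn
  have hTQnn : ∀ (k : ℕ) (c : ↥Bndᶜ) (y : ↥Bnd), 0 ≤ ((G * PAB) * Q ^ k) c y := fun k =>
    mul_entry_nonneg (G * PAB) (Q ^ k) hTnn (hQpnn k)
  -- G z z ≥ 1
  have hGdiag : ∀ z : ↥Bndᶜ, (1 : ℝ) ≤ G z z := by
    intro z
    have h := green_ge_pow P hnonneg hrow hirr Bnd hB 0 z z
    rwa [pow_zero, Matrix.one_apply_eq] at h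
  -- T positivity from one-step
  have hTpos : ∀ (z : ↥Bndᶜ) (y : ↥Bnd), 0 < P z.1 y.1 → 0 < (G * PAB) z y := by
    intro z y hp
    have h1 : G z z * PAB z y ≤ (G * PAB) z y := by
      rw [Matrix.mul_apply]
      exact Finset.single_le_sum (f := fun c => G z c * PAB c y)
        (fun c _ => mul_nonneg (hGnn z c) (hPABnn c y)) (Finset.mem_univ z)
    have h2 : 0 < G z z * PAB z y := mul_pos (lt_of_lt_of_le one_pos (hGdiag z)) hp
    linarith
  -- Q ≥ P entrywise on boundary
  have hQgeP : ∀ x y : ↥Bnd, P x.1 y.1 ≤ Q x y := by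
    intro x y
    have h2 : 0 ≤ (subMatrix2 P Bnd Bndᶜ * G * PAB) x y := by
      rw [Matrix.mul_assoc]
      exact mul_entry_nonneg _ _ (fun i j => hnonneg i.1 j.1) hTnn x y
    have : Q x y = subMatrix P Bnd x y + (subMatrix2 P Bnd Bndᶜ * G * PAB) x y := rfl
    have h3 : subMatrix P Bnd x y = P x.1 y.1 := rfl
    linarith
  -- Q x b ≥ P x w * T w b
  have hQgeT : ∀ (x : ↥Bnd) (w : ↥Bndᶜ) (b : ↥Bnd), P x.1 w.1 * (G * PAB) w b ≤ Q x b := by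
    intro x w b
    have h1 : (subMatrix2 P Bnd Bndᶜ * (G * PAB)) x b
        = ∑ c : ↥Bndᶜ, P x.1 c.1 * (G * PAB) c b := by rw [Matrix.mul_apply]; rfl
    have h2 : P x.1 w.1 * (G * PAB) w b ≤ ∑ c : ↥Bndᶜ, P x.1 c.1 * (G * PAB) c b :=
      Finset.single_le_sum (f := fun c : ↥Bndᶜ => P x.1 c.1 * (G * PAB) c b)
        (fun c _ => mul_nonneg (hnonneg x.1 c.1) (hTnn c b)) (Finset.mem_univ w)
    have h3 : Q x b = subMatrix P Bnd x b + (subMatrix2 P Bnd Bndᶜ * (G * PAB)) x b := by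
      rw [hQ, Qmat, Matrix.mul_assoc]; rfl
    have h4 : (0:ℝ) ≤ subMatrix P Bnd x b := hnonneg x.1 b.1
    linarith
  -- G = 1 + M * G
  have hG1 : G = 1 + M * G := by
    have h := green_decomp P hnonneg hrow hirr Bnd hB 1
    rwa [Finset.sum_range_one, pow_zero, pow_one] at h
  -- G z c ≥ M z w * G w c
  have hGge : ∀ z w c : ↥Bndᶜ, M z w * G w c ≤ G z c := by
    intro z w c
    have h1 : G z c = (1 : Matrix ↥Bndᶜ ↥Bndᶜ ℝ) z c + (M * G) z c := by
      conv_lhs => rw [hG1]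
      rw [Matrix.add_apply]
    have h2 : M z w * G w c ≤ (M * G) z c := by
      rw [Matrix.mul_apply]
      exact Finset.single_le_sum (f := fun e => M z e * G e c)
        (fun e _ => mul_nonneg (hnonneg z.1 e.1) (hGnn e c)) (Finset.mem_univ w)
    have h3 : (0:ℝ) ≤ (1 : Matrix ↥Bndᶜ ↥Bndᶜ ℝ) z c := by
      rw [Matrix.one_apply]; split <;> norm_num
    linarith
  -- step for T * Q^k through interior
  have hTQstep : ∀ (z w : ↥Bndᶜ) (y : ↥Bnd) (k : ℕ),
      P z.1 w.1 * ((G * PAB) * Q ^ k) w y ≤ ((G * PAB) * Q ^ k) z y := by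
    intro z w y k
    have hRnn : ∀ (c : ↥Bndᶜ) (b : ↥Bnd), 0 ≤ (PAB * Q ^ k) c b :=
      mul_entry_nonneg PAB (Q ^ k) hPABnn (hQpnn k)
    have e1 : ∀ v : ↥Bndᶜ, ((G * PAB) * Q ^ k) v y = ∑ c : ↥Bndᶜ, G v c * (PAB * Q ^ k) c y := by
      intro v
      rw [Matrix.mul_assoc, Matrix.mul_apply]
    rw [e1 z, e1 w, Finset.mul_sum]
    refine Finset.sum_le_sum fun c _ => ?_
    have h1 : P z.1 w.1 * (G w c * (PAB * Q ^ k) c y) = (M z w * G w c) * (PAB * Q ^ k) c y := by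
      have : M z w = P z.1 w.1 := rfl
      rw [this]; ring
    rw [h1]
    exact mul_le_mul_of_nonneg_right (hGge z w c) (hRnn c y)
  -- step for Q^(k+1)
  have hQQstep : ∀ (x b : ↥Bnd) (y : ↥Bnd) (k : ℕ), Q x b * (Q ^ k) b y ≤ (Q ^ (k + 1)) x y := by
    intro x b y k
    rw [pow_succ', Matrix.mul_apply]
    exact Finset.single_le_sum (f := fun b => Q x b * (Q ^ k) b y)
      (fun b _ => mul_nonneg (hQnn x b) (hQpnn k b y)) (Finset.mem_univ b)
  -- Q^(k+1) x y ≥ P x w * (T Q^k) w y  for w interior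
  have hQTstep : ∀ (x : ↥Bnd) (w : ↥Bndᶜ) (y : ↥Bnd) (k : ℕ),
      P x.1 w.1 * ((G * PAB) * Q ^ k) w y ≤ (Q ^ (k + 1)) x y := by
    intro x w y k
    have h1 : (Q ^ (k + 1)) x y = ∑ b : ↥Bnd, Q x b * (Q ^ k) b y := by
      rw [pow_succ', Matrix.mul_apply]
    have h2 : ∀ b : ↥Bnd, (P x.1 w.1 * (G * PAB) w b) * (Q ^ k) b y ≤ Q x b * (Q ^ k) b y :=
      fun b => mul_le_mul_of_nonneg_right (hQgeT x w b) (hQpnn k b y)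
    have h3 : P x.1 w.1 * ((G * PAB) * Q ^ k) w y
        = ∑ b : ↥Bnd, (P x.1 w.1 * (G * PAB) w b) * (Q ^ k) b y := by
      rw [Matrix.mul_apply, Finset.mul_sum]
      refine Finset.sum_congr rfl fun b _ => ?_; ring
    rw [h1, h3]
    exact Finset.sum_le_sum fun b _ => h2 b
  intro m
  induction m using Nat.strong_induction_on with
  | _ m IH =>
    intro hm
    obtain ⟨m', rfl⟩ : ∃ m', m = m' + 1 := ⟨m - 1, (Nat.succ_pred_eq_of_pos hm).symm⟩
    constructor
    · intro x y hpos
      rcases Nat.eq_zero_or_pos m' with rfl | hm'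
      · refine ⟨1, le_refl 1, ?_⟩
        simp only [zero_add, pow_one] at hpos ⊢
        exact lt_of_lt_of_le hpos (hQgeP x y)
      · rw [pow_succ', Matrix.mul_apply] at hpos
        obtain ⟨w, hw⟩ := exists_pos_term _ (fun w => mul_nonneg (hnonneg x.1 w)
          (pow_entry_nonneg P hnonneg m' w y.1)) hpos
        obtain ⟨hw1, hw2⟩ := pos_pos (hnonneg x.1 w) (pow_entry_nonneg P hnonneg m' w y.1) hw
        by_cases hwB : w ∈ Bnd
        · obtain ⟨k, hk1, hk2⟩ := (IH m' (Nat.lt_succ_self m') hm').1 ⟨w, hwB⟩ y hw2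
          refine ⟨k + 1, by omega, ?_⟩
          calc (0:ℝ) < P x.1 w * (Q ^ k) ⟨w, hwB⟩ y := mul_pos hw1 hk2
            _ ≤ Q x ⟨w, hwB⟩ * (Q ^ k) ⟨w, hwB⟩ y :=
                mul_le_mul_of_nonneg_right (hQgeP x ⟨w, hwB⟩) (le_of_lt hk2)
            _ ≤ (Q ^ (k + 1)) x y := hQQstep x ⟨w, hwB⟩ y k
        · have hwA : w ∈ Bndᶜ := Finset.mem_compl.mpr hwB
          obtain ⟨k, hk⟩ := (IH m' (Nat.lt_succ_self m') hm').2 ⟨w, hwA⟩ y hw2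
          refine ⟨k + 1, by omega, ?_⟩
          calc (0:ℝ) < P x.1 w * ((G * PAB) * Q ^ k) ⟨w, hwA⟩ y := mul_pos hw1 hk
            _ ≤ (Q ^ (k + 1)) x y := hQTstep x ⟨w, hwA⟩ y k
    · intro z y hpos
      rcases Nat.eq_zero_or_pos m' with rfl | hm'
      · refine ⟨0, ?_⟩
        rw [pow_zero, Matrix.mul_one]
        simp only [zero_add, pow_one] at hpos
        exact hTpos z y hpos
      · rw [pow_succ', Matrix.mul_apply] at hpos
        obtain ⟨w, hw⟩ := exists_pos_term _ (fun w => mul_nonneg (hnonneg z.1 w)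
          (pow_entry_nonneg P hnonneg m' w y.1)) hpos
        obtain ⟨hw1, hw2⟩ := pos_pos (hnonneg z.1 w) (pow_entry_nonneg P hnonneg m' w y.1) hw
        by_cases hwB : w ∈ Bnd
        · obtain ⟨k, hk1, hk2⟩ := (IH m' (Nat.lt_succ_self m') hm').1 ⟨w, hwB⟩ y hw2
          refine ⟨k, ?_⟩
          have h1 : (G * PAB) z ⟨w, hwB⟩ * (Q ^ k) ⟨w, hwB⟩ y ≤ ((G * PAB) * Q ^ k) z y := by
            rw [Matrix.mul_apply]
            exact Finset.single_le_sum (f := fun b => (G * PAB) z b * (Q ^ k) b y)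
              (fun b _ => mul_nonneg (hTnn z b) (hQpnn k b y)) (Finset.mem_univ (⟨w, hwB⟩ : ↥Bnd))
          have h2 : 0 < (G * PAB) z ⟨w, hwB⟩ := hTpos z ⟨w, hwB⟩ hw1
          calc (0:ℝ) < (G * PAB) z ⟨w, hwB⟩ * (Q ^ k) ⟨w, hwB⟩ y := mul_pos h2 hk2
            _ ≤ ((G * PAB) * Q ^ k) z y := h1
        · have hwA : w ∈ Bndᶜ := Finset.mem_compl.mpr hwB
          obtain ⟨k, hk⟩ := (IH m' (Nat.lt_succ_self m') hm').2 ⟨w, hwA⟩ y hw2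
          refine ⟨k, ?_⟩
          calc (0:ℝ) < P z.1 w * ((G * PAB) * Q ^ k) ⟨w, hwA⟩ y := mul_pos hw1 hk
            _ ≤ ((G * PAB) * Q ^ k) z y := hTQstep z ⟨w, hwA⟩ y k
end Aux
end BChain

/-- The boundary transition matrix `Q` is stochastic and
irreducible, and the restriction of `π` to `∂X` is stationary for `Q`. -/
theorem boundary_chain_stochastic_irreducible_stationary {X : Type*}
    [Fintype X] [DecidableEq X]
    (P : Matrix X X ℝ)
    (hcard : 1 < Fintype.card X)
    (hnonneg : ∀ x y, 0 ≤ P x y)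
    (hrow : ∀ x, ∑ y, P x y = 1)
    (hirr : ∀ x y, ∃ n, 1 ≤ n ∧ 0 < (P ^ n) x y)
    (π : X → ℝ)
    (hπstat : ∀ y, ∑ x, π x * P x y = π y)
    (hπpos : ∀ x, 0 < π x) (hπsum : ∑ x, π x = 1)
    (Bnd : Finset X) (hB : Bnd.Nonempty) (hB' : Bnd ≠ Finset.univ) :
    (∀ x y : ↥Bnd, 0 ≤ Qmat P Bnd x y) ∧
    (∀ x : ↥Bnd, ∑ y : ↥Bnd, Qmat P Bnd x y = 1) ∧
    (∀ x y : ↥Bnd, ∃ n, 1 ≤ n ∧ 0 < ((Qmat P Bnd) ^ n) x y) ∧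
    (∀ y : ↥Bnd, ∑ x : ↥Bnd, π x.1 * Qmat P Bnd x y = π y.1) := by
  refine ⟨BChain.Q_nonneg P hnonneg hrow hirr Bnd hB,
    BChain.Q_rowsum P hnonneg hrow hirr Bnd hB, ?_,
    BChain.Q_stat P hnonneg hrow hirr Bnd hB π hπstat⟩
  intro x y
  obtain ⟨n, hn1, hnpos⟩ := hirr x.1 y.1
  exact (BChain.reach P hnonneg hrow hirr Bnd hB n hn1).1 x y hnpos
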